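/- Three-dimensional Euclidean space can be decomposed as the disjoint union of circles of radius 1: there is a family 𝒞 of pairwise disjoint subsets of ℝ³ whose union is all of ℝ³, such that each C ∈ 𝒞 is a circle of radius 1, i.e., there exist a point c ∈ ℝ³ and a two-dimensional affine subspace P of ℝ³ with c ∈ P such that C = {x ∈ P | dist(x, c) = 1}. -/

import Mathlib

/-- A unit circle in `ℝ³`: the set of points of a plane (two-dimensional affine
subspace) at distance 1 from a center lying in that plane. -/
def IsUnitCircle (C : Set (EuclideanSpace ℝ (Fin 3))) : Prop :=
  ∃ (P : AffineSubspace ℝ (EuclideanSpace ℝ (Fin 3))) (c : EuclideanSpace ℝ (Fin 3)),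
    Module.finrank ℝ P.direction = 2 ∧ c ∈ P ∧ C = {x | x ∈ P ∧ dist x c = 1}



open scoped RealInnerProductSpace

noncomputable section

variable {V : Type*} [NormedAddCommGroup V] [InnerProductSpace ℝ V]


/-- A line meets a sphere in a finite set. -/
lemma finite_line_inter_sphere (a v c : V) :
    {x : V | (∃ s : ℝ, x = a + s • v) ∧ dist x c = 1}.Finite := by
  rcases eq_or_ne v 0 with rfl | hv
  · apply Set.Finite.subset (Set.finite_singleton a)
    rintro x ⟨⟨s, rfl⟩, -⟩; simp
  · have key : {s : ℝ | dist (a + s • v) c = 1}.Finite := by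
      set q : Polynomial ℝ :=
        Polynomial.C (‖v‖^2) * Polynomial.X^2 + Polynomial.C (2*⟪a-c,v⟫) * Polynomial.X
          + Polynomial.C (‖a-c‖^2 - 1) with hq
      have hq0 : q ≠ 0 := by
        intro h
        have : q.coeff 2 = 0 := by rw [h]; simp
        rw [hq] at this
        simp only [Polynomial.coeff_add, Polynomial.coeff_C_mul, Polynomial.coeff_X_pow,
          Polynomial.coeff_C, Polynomial.coeff_X, Polynomial.mul_coeff_zero] at this
        norm_num at this
        exact hv this
      apply Set.Finite.subset (Polynomial.finite_setOf_isRoot hq0)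
      intro s hs
      have hs' : ‖(a - c) + s • v‖^2 = 1 := by
        rw [Set.mem_setOf_eq, dist_eq_norm] at hs
        rw [show a - c + s • v = a + s • v - c by abel, hs]; norm_num
      rw [norm_add_sq_real, real_inner_smul_right, norm_smul] at hs'
      simp only [Set.mem_setOf_eq, Polynomial.IsRoot, hq]
      simp only [Polynomial.eval_add, Polynomial.eval_mul, Polynomial.eval_pow,
        Polynomial.eval_C, Polynomial.eval_X]
      rw [mul_pow, Real.norm_eq_abs, sq_abs] at hs'
      nlinarith [hs']
    have := key.image (fun s => a + s • v)
    apply Set.Finite.subset this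
    rintro x ⟨⟨s, rfl⟩, hd⟩
    exact ⟨s, hd, rfl⟩

/-- An affine subspace of dimension at most 1 meets a sphere in a finite set. -/
lemma finite_flat_inter_sphere [FiniteDimensional ℝ V] (W : AffineSubspace ℝ V) (c : V)
    (hW : Module.finrank ℝ W.direction ≤ 1) :
    {x : V | x ∈ W ∧ dist x c = 1}.Finite := by
  rcases (W : Set V).eq_empty_or_nonempty with he | ⟨a, ha⟩
  · apply Set.Finite.subset (Set.finite_empty)
    rintro x ⟨hx, -⟩; rw [← he]; exact hx
  · have hp : W.direction.IsPrincipal := (W.direction.finrank_le_one_iff_isPrincipal).1 hW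
    obtain ⟨v, hv⟩ := hp
    apply Set.Finite.subset (finite_line_inter_sphere a v c)
    rintro x ⟨hx, hd⟩
    refine ⟨?_, hd⟩
    have : x - a ∈ W.direction := AffineSubspace.vsub_mem_direction hx ha
    rw [hv, Submodule.mem_span_singleton] at this
    obtain ⟨s, hs⟩ := this
    exact ⟨s, by rw [hs]; abel⟩

/-- A circle lying in plane `Q` meets a different plane `P` in a finite set. -/
lemma finite_circle_inter_plane [FiniteDimensional ℝ V] (P Q : AffineSubspace ℝ V)
    (hP : Module.finrank ℝ P.direction = 2) (hQ : Module.finrank ℝ Q.direction = 2)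
    (hne : P ≠ Q) (c : V) :
    {x : V | (x ∈ Q ∧ dist x c = 1) ∧ x ∈ P}.Finite := by
  rcases ((Q ⊓ P : AffineSubspace ℝ V) : Set V).eq_empty_or_nonempty with he | ⟨x0, hx0⟩
  · apply Set.Finite.subset (Set.finite_empty)
    rintro x ⟨⟨hxQ, -⟩, hxP⟩
    rw [← he]; exact ⟨hxQ, hxP⟩
  · have hx0Q : x0 ∈ Q := hx0.1
    have hx0P : x0 ∈ P := hx0.2
    have hdir : (Q ⊓ P).direction = Q.direction ⊓ P.direction :=
      AffineSubspace.direction_inf_of_mem hx0Q hx0P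
    have hdirne : Q.direction ≠ P.direction := by
      intro h
      exact hne (AffineSubspace.ext_of_direction_eq h.symm ⟨x0, hx0P, hx0Q⟩)
    have hlt : Q.direction ⊓ P.direction < Q.direction := by
      rcases lt_or_eq_of_le (inf_le_left : Q.direction ⊓ P.direction ≤ Q.direction) with h | h
      · exact h
      · exfalso
        have : Q.direction ≤ P.direction := by rw [← h]; exact inf_le_right
        exact hdirne (Submodule.eq_of_le_of_finrank_le this (by rw [hP, hQ]))
    have hfr : Module.finrank ℝ (Q ⊓ P).direction ≤ 1 := by
      rw [hdir]
      have := Submodule.finrank_lt_finrank_of_lt hlt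
      omega
    apply Set.Finite.subset (finite_flat_inter_sphere (Q ⊓ P) c hfr)
    rintro x ⟨⟨hxQ, hd⟩, hxP⟩
    exact ⟨⟨hxQ, hxP⟩, hd⟩

/-- In a plane `P`, the set of points at distance 1 from two distinct points is finite. -/
lemma finite_centers [FiniteDimensional ℝ V] (P : AffineSubspace ℝ V)
    (hP : Module.finrank ℝ P.direction = 2) {p q : V} (hp : p ∈ P) (hq : q ∈ P) (hpq : p ≠ q) :
    {x : V | x ∈ P ∧ dist x p = 1 ∧ dist x q = 1}.Finite := by
  set B := AffineSubspace.perpBisector p q with hB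
  rcases ((P ⊓ B : AffineSubspace ℝ V) : Set V).eq_empty_or_nonempty with he | ⟨x0, hx0⟩
  · apply Set.Finite.subset (Set.finite_empty)
    rintro x ⟨hxP, h1, h2⟩
    rw [← he]
    exact ⟨hxP, AffineSubspace.mem_perpBisector_iff_dist_eq.2 (by rw [h1, h2])⟩
  · have hdir : (P ⊓ B).direction = P.direction ⊓ B.direction :=
      AffineSubspace.direction_inf_of_mem hx0.1 hx0.2
    have hBd : B.direction = (ℝ ∙ (q -ᵥ p))ᗮ := AffineSubspace.direction_perpBisector p q
    have hmem : q -ᵥ p ∈ P.direction := AffineSubspace.vsub_mem_direction hq hp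
    have hlt : P.direction ⊓ B.direction < P.direction := by
      rcases lt_or_eq_of_le (inf_le_left : P.direction ⊓ B.direction ≤ P.direction) with h | h
      · exact h
      · exfalso
        have hle : P.direction ≤ B.direction := by rw [← h]; exact inf_le_right
        have : q -ᵥ p ∈ (ℝ ∙ (q -ᵥ p))ᗮ := by rw [← hBd]; exact hle hmem
        rw [Submodule.mem_orthogonal_singleton_iff_inner_right] at this
        rw [inner_self_eq_zero, vsub_eq_zero_iff_eq] at this
        exact hpq this.symm
    have hfr : Module.finrank ℝ (P ⊓ B).direction ≤ 1 := by
      rw [hdir]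
      have := Submodule.finrank_lt_finrank_of_lt hlt
      omega
    apply Set.Finite.subset (finite_flat_inter_sphere (P ⊓ B) p hfr)
    rintro x ⟨hxP, h1, h2⟩
    exact ⟨⟨hxP, AffineSubspace.mem_perpBisector_iff_dist_eq.2 (by rw [h1, h2])⟩, h1⟩

abbrev V3 := EuclideanSpace ℝ (Fin 3)

noncomputable def nvec (t : ℝ) : V3 :=
  EuclideanSpace.single 0 (1:ℝ) + t • EuclideanSpace.single 1 (1:ℝ)

lemma nvec_apply0 (t : ℝ) : nvec t 0 = 1 := by
  simp [nvec, EuclideanSpace.single_apply]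

lemma nvec_apply1 (t : ℝ) : nvec t 1 = t := by
  simp [nvec, EuclideanSpace.single_apply]

lemma nvec_ne_zero (t : ℝ) : nvec t ≠ 0 := by
  intro h
  have := congrArg (fun x : V3 => x 0) h
  simp [nvec_apply0] at this

noncomputable def planeAt (p : V3) (t : ℝ) : AffineSubspace ℝ V3 :=
  AffineSubspace.mk' p ((ℝ ∙ (nvec t))ᗮ)

lemma planeAt_mem (p : V3) (t : ℝ) : p ∈ planeAt p t := AffineSubspace.self_mem_mk' _ _

lemma planeAt_finrank (p : V3) (t : ℝ) :
    Module.finrank ℝ (planeAt p t).direction = 2 := by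
  haveI : Fact (Module.finrank ℝ V3 = 2 + 1) := ⟨by simp [finrank_euclideanSpace_fin]⟩
  rw [planeAt, AffineSubspace.direction_mk']
  exact Submodule.finrank_orthogonal_span_singleton (nvec_ne_zero t)

lemma planeAt_injective (p : V3) : Function.Injective (planeAt p) := by
  intro t s h
  have hdir : (ℝ ∙ (nvec t))ᗮ = (ℝ ∙ (nvec s))ᗮ := by
    have := congrArg AffineSubspace.direction h
    rwa [planeAt, planeAt, AffineSubspace.direction_mk', AffineSubspace.direction_mk'] at this
  have hspan : (ℝ ∙ (nvec t)) = (ℝ ∙ (nvec s)) := by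
    have := congrArg (fun W : Submodule ℝ V3 => Wᗮ) hdir
    simpa [Submodule.orthogonal_orthogonal] using this
  have : nvec s ∈ (ℝ ∙ (nvec t)) := by rw [hspan]; exact Submodule.mem_span_singleton_self _
  rw [Submodule.mem_span_singleton] at this
  obtain ⟨k, hk⟩ := this
  have h0 := congrArg (fun x : V3 => x 0) hk
  have h1 := congrArg (fun x : V3 => x 1) hk
  simp only [PiLp.smul_apply, smul_eq_mul] at h0 h1
  rw [nvec_apply0, nvec_apply0] at h0
  rw [nvec_apply1, nvec_apply1] at h1
  rw [mul_one] at h0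
  rw [h0] at h1
  linarith [h1]

lemma exists_center_family (P : AffineSubspace ℝ V3)
    (hP : Module.finrank ℝ P.direction = 2) {p : V3} (hp : p ∈ P) :
    ∃ c : ℝ → V3, Function.Injective c ∧ ∀ t, c t ∈ P ∧ dist p (c t) = 1 := by
  classical
  set D := P.direction with hD
  -- find u ∈ D nonzero
  have hDne : D ≠ ⊥ := by
    intro h
    rw [h] at hP
    simp at hP
  obtain ⟨u, huD, hu0⟩ := (Submodule.ne_bot_iff D).1 hDne
  -- find v ∈ D not in span u
  have hv : ∃ v ∈ D, v ∉ (ℝ ∙ u) := by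
    by_contra h
    push_neg at h
    have hle : D ≤ (ℝ ∙ u) := fun x hx => h x hx
    have := Submodule.finrank_mono (R := ℝ) (M := V3) hle
    rw [finrank_span_singleton hu0] at this
    omega
  obtain ⟨v, hvD, hvu⟩ := hv
  -- key independence fact
  have indep : ∀ a b : ℝ, a • u + b • v = 0 → a = 0 ∧ b = 0 := by
    intro a b hab
    have hb : b = 0 := by
      by_contra hb
      apply hvu
      rw [Submodule.mem_span_singleton]
      refine ⟨-b⁻¹ * a, ?_⟩
      have h' : a • u = -(b • v) := eq_neg_of_add_eq_zero_left hab
      rw [mul_smul, h', smul_neg, neg_smul, neg_neg, smul_smul, inv_mul_cancel₀ hb, one_smul]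
    refine ⟨?_, hb⟩
    rw [hb, zero_smul, add_zero, smul_eq_zero] at hab
    tauto
  set w : ℝ → V3 := fun t => u + t • v with hw
  have hw0 : ∀ t, w t ≠ 0 := by
    intro t h
    rcases (indep 1 t (by rw [one_smul]; exact h)) with ⟨h1, -⟩
    norm_num at h1
  set d : ℝ → V3 := fun t => ‖w t‖⁻¹ • w t with hd
  have hdnorm : ∀ t, ‖d t‖ = 1 := fun t => norm_smul_inv_norm (𝕜 := ℝ) (hw0 t)
  have hdD : ∀ t, d t ∈ D :=
    fun t => Submodule.smul_mem _ _ (Submodule.add_mem _ huD (Submodule.smul_mem _ _ hvD))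
  refine ⟨fun t => d t + p, ?_, ?_⟩
  · intro t s h
    have h' : d t = d s := by
      have := congrArg (fun x => x - p) h
      simpa using this
    rw [hd] at h'
    simp only at h'
    -- ‖w t‖⁻¹ • (u + t • v) = ‖w s‖⁻¹ • (u + s • v)
    have ht' : ‖w t‖⁻¹ • u + (‖w t‖⁻¹ * t) • v = ‖w s‖⁻¹ • u + (‖w s‖⁻¹ * s) • v := by
      calc ‖w t‖⁻¹ • u + (‖w t‖⁻¹ * t) • v = ‖w t‖⁻¹ • (u + t • v) := by
            rw [smul_add, mul_smul]
        _ = ‖w s‖⁻¹ • (u + s • v) := h'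
        _ = ‖w s‖⁻¹ • u + (‖w s‖⁻¹ * s) • v := by rw [smul_add, mul_smul]
    have hexp : (‖w t‖⁻¹ - ‖w s‖⁻¹) • u + (‖w t‖⁻¹ * t - ‖w s‖⁻¹ * s) • v = 0 := by
      calc (‖w t‖⁻¹ - ‖w s‖⁻¹) • u + (‖w t‖⁻¹ * t - ‖w s‖⁻¹ * s) • v
          = (‖w t‖⁻¹ • u + (‖w t‖⁻¹ * t) • v) - (‖w s‖⁻¹ • u + (‖w s‖⁻¹ * s) • v) := by
            rw [sub_smul, sub_smul]; abel
        _ = 0 := sub_eq_zero_of_eq ht'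
    obtain ⟨h1, h2⟩ := indep _ _ hexp
    have hr : ‖w t‖⁻¹ = ‖w s‖⁻¹ := by linarith [h1]
    have hrne : ‖w t‖⁻¹ ≠ 0 := inv_ne_zero (norm_ne_zero_iff.2 (hw0 t))
    have h2' : ‖w t‖⁻¹ * t = ‖w t‖⁻¹ * s := by rw [hr] at h2 ⊢; linarith [h2]
    exact mul_left_cancel₀ hrne h2'
  · intro t
    constructor
    · have := AffineSubspace.vadd_mem_of_mem_direction (hdD t) hp
      simpa [vadd_eq_add] using this
    · rw [dist_eq_norm]
      have : p - (d t + p) = -(d t) := by abel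
      rw [this, norm_neg, hdnorm t]


lemma exists_avoid {β : Type} (f : ℝ → β) (hf : Function.Injective f) (bad : Set β)
    (h : Cardinal.mk bad < Cardinal.continuum) : ∃ t, f t ∉ bad := by
  by_contra hcon
  push_neg at hcon
  have : Cardinal.mk ℝ ≤ Cardinal.mk bad :=
    Cardinal.mk_le_of_injective (f := fun t : ℝ => (⟨f t, hcon t⟩ : bad))
      (fun a b hab => hf (congrArg Subtype.val hab))
  rw [Cardinal.mk_real] at this
  exact absurd (lt_of_le_of_lt this h) (lt_irrefl _)

lemma exists_disjoint_circle (S : Set (Set V3)) (hcard : Cardinal.mk S < Cardinal.continuum)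
    (hS : ∀ C ∈ S, IsUnitCircle C) (p : V3) (hp : ∀ C ∈ S, p ∉ C) :
    ∃ C, IsUnitCircle C ∧ p ∈ C ∧ ∀ D ∈ S, Disjoint C D := by
  classical
  choose! Q ctr hQ2 hctr hCeq using hS
  -- pick a plane through p distinct from the planes of all circles in S
  have hbadplanes : Cardinal.mk (Q '' S) < Cardinal.continuum :=
    lt_of_le_of_lt (Cardinal.mk_image_le) hcard
  obtain ⟨t₀, ht₀⟩ := exists_avoid (planeAt p) (planeAt_injective p) (Q '' S) hbadplanes
  set P := planeAt p t₀ with hPdef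
  have hPrank : Module.finrank ℝ P.direction = 2 := planeAt_finrank p t₀
  have hPmem : p ∈ P := planeAt_mem p t₀
  have hPne : ∀ C ∈ S, P ≠ Q C := by
    intro C hC h
    exact ht₀ ⟨C, hC, h.symm⟩
  -- the set of points of P lying on a circle of S is small
  set B := {x : V3 | x ∈ ⋃₀ S ∧ x ∈ P} with hBdef
  have hBsub : B = ⋃ C : S, ((C : Set V3) ∩ {x | x ∈ P}) := by
    ext x
    simp only [hBdef, Set.mem_setOf_eq, Set.mem_iUnion, Set.mem_inter_iff, Set.mem_sUnion]
    constructor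
    · rintro ⟨⟨C, hC, hxC⟩, hxP⟩; exact ⟨⟨C, hC⟩, hxC, hxP⟩
    · rintro ⟨⟨C, hC⟩, hxC, hxP⟩; exact ⟨⟨C, hC, hxC⟩, hxP⟩
  have hfin : ∀ C : S, ((C : Set V3) ∩ {x | x ∈ P}).Finite := by
    rintro ⟨C, hC⟩
    have : (C : Set V3) = {x | x ∈ Q C ∧ dist x (ctr C) = 1} := hCeq C hC
    apply Set.Finite.subset (finite_circle_inter_plane P (Q C) hPrank (hQ2 C hC) (hPne C hC)
      (ctr C))
    rintro x ⟨hxC, hxP⟩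
    have hxC' : x ∈ C := hxC
    rw [this] at hxC'
    exact ⟨hxC', hxP⟩
  have hBcard : Cardinal.mk B < Cardinal.continuum := by
    rw [hBsub]
    apply lt_of_le_of_lt (Cardinal.mk_iUnion_le _)
    apply Cardinal.mul_lt_of_lt Cardinal.aleph0_le_continuum hcard
    apply lt_of_le_of_lt _ Cardinal.aleph0_lt_continuum
    exact ciSup_le' fun C => (hfin C).countable.le_aleph0
  -- family of circles in P through p
  obtain ⟨c, hcinj, hc⟩ := exists_center_family P hPrank hPmem
  -- the set of bad parameters is small
  set T := {t : ℝ | ∃ q ∈ B, dist (c t) q = 1} with hTdef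
  have hTsub : T ⊆ ⋃ q : B, {t : ℝ | dist (c t) (q : V3) = 1} := by
    rintro t ⟨q, hq, hd⟩
    exact Set.mem_iUnion.2 ⟨⟨q, hq⟩, hd⟩
  have hTfin : ∀ q : B, ({t : ℝ | dist (c t) (q : V3) = 1}).Finite := by
    rintro ⟨q, hqB⟩
    have hqP : q ∈ P := hqB.2
    have hqp : p ≠ q := by
      rintro rfl
      obtain ⟨C, hC, hpC⟩ := hqB.1
      exact hp C hC hpC
    have hfinc := finite_centers P hPrank hPmem hqP hqp
    have : {t : ℝ | dist (c t) q = 1} ⊆ c ⁻¹' {x : V3 | x ∈ P ∧ dist x p = 1 ∧ dist x q = 1} := by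
      intro t ht
      exact ⟨(hc t).1, by rw [dist_comm]; exact (hc t).2, ht⟩
    exact Set.Finite.subset (Set.Finite.preimage (hcinj.injOn) hfinc) this
  have hTcard : Cardinal.mk T < Cardinal.continuum := by
    apply lt_of_le_of_lt (Cardinal.mk_le_mk_of_subset hTsub)
    apply lt_of_le_of_lt (Cardinal.mk_iUnion_le _)
    apply Cardinal.mul_lt_of_lt Cardinal.aleph0_le_continuum hBcard
    apply lt_of_le_of_lt _ Cardinal.aleph0_lt_continuum
    exact ciSup_le' fun q => (hTfin q).countable.le_aleph0
  obtain ⟨t₁, ht₁⟩ := exists_avoid (id : ℝ → ℝ) Function.injective_id T hTcard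
  refine ⟨{x | x ∈ P ∧ dist x (c t₁) = 1}, ⟨P, c t₁, hPrank, (hc t₁).1, rfl⟩,
    ⟨hPmem, (hc t₁).2⟩, ?_⟩
  intro D hD
  rw [Set.disjoint_left]
  rintro x ⟨hxP, hxd⟩ hxD
  apply ht₁
  refine ⟨x, ⟨⟨D, hD, hxD⟩, hxP⟩, by rw [dist_comm]; exact hxd⟩

lemma mk_V3 : Cardinal.mk V3 = Cardinal.continuum := by
  have e : V3 ≃ (Fin 3 → ℝ) := WithLp.equiv 2 _
  rw [Cardinal.mk_congr e]
  rw [← Cardinal.power_def]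
  rw [Cardinal.mk_real, Cardinal.mk_fintype]
  simp only [Fintype.card_fin]
  norm_num
  exact Cardinal.power_nat_eq Cardinal.aleph0_le_continuum (by norm_num)

abbrev Idx := (Cardinal.continuum).ord.ToType

noncomputable def pt : Idx ≃ V3 :=
  Classical.choice (Cardinal.eq.1 (by rw [Cardinal.mk_toType, Cardinal.card_ord, mk_V3]))

open Classical in
noncomputable def F : Idx → Set V3 :=
  WellFounded.fix wellFounded_lt fun i rec =>
    if h : ∃ C, IsUnitCircle C ∧ pt i ∈ C ∧
        ∀ j, (hj : j < i) → rec j hj = C ∨ Disjoint (rec j hj) C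
    then h.choose else ∅

open Classical in
lemma F_eq (i : Idx) :
    F i = if h : ∃ C, IsUnitCircle C ∧ pt i ∈ C ∧
        ∀ j, (hj : j < i) → F j = C ∨ Disjoint (F j) C
      then h.choose else ∅ := by
  rw [F, WellFounded.fix_eq]

lemma F_spec (i : Idx) :
    IsUnitCircle (F i) ∧ pt i ∈ F i ∧ ∀ j, j < i → F j = F i ∨ Disjoint (F j) (F i) := by
  induction i using WellFoundedLT.induction with
  | ind i ih =>
    have hex : ∃ C, IsUnitCircle C ∧ pt i ∈ C ∧
        ∀ j, (hj : j < i) → F j = C ∨ Disjoint (F j) C := by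
      by_cases hcov : ∃ j, j < i ∧ pt i ∈ F j
      · obtain ⟨j, hj, hmem⟩ := hcov
        refine ⟨F j, (ih j hj).1, hmem, ?_⟩
        intro k hk
        rcases lt_trichotomy k j with h | h | h
        · exact (ih j hj).2.2 k h
        · exact Or.inl (by rw [h])
        · rcases (ih k hk).2.2 j h with h' | h'
          · exact Or.inl h'.symm
          · exact Or.inr h'.symm
      · push_neg at hcov
        have hScard : Cardinal.mk (F '' (Set.Iio i)) < Cardinal.continuum :=
          lt_of_le_of_lt (Cardinal.mk_image_le) (Cardinal.mk_Iio_toType_ord_lt i)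
        have hcirc : ∀ C ∈ F '' (Set.Iio i), IsUnitCircle C := by
          rintro C ⟨j, hj, rfl⟩
          exact (ih j hj).1
        have hnp : ∀ C ∈ F '' (Set.Iio i), pt i ∉ C := by
          rintro C ⟨j, hj, rfl⟩
          exact hcov j hj
        obtain ⟨C, hC1, hC2, hC3⟩ :=
          exists_disjoint_circle (F '' (Set.Iio i)) hScard hcirc (pt i) hnp
        exact ⟨C, hC1, hC2, fun j hj =>
          Or.inr (hC3 (F j) ⟨j, hj, rfl⟩).symm⟩
    rw [F_eq i]
    rw [dif_pos hex]
    obtain ⟨h1, h2, h3⟩ := hex.choose_spec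
    exact ⟨h1, h2, fun j hj => h3 j hj⟩

/-- `ℝ³` can be decomposed as a disjoint union of circles of radius 1. -/
theorem r3_disjoint_union_of_unit_circles :
    ∃ 𝒞 : Set (Set (EuclideanSpace ℝ (Fin 3))),
      (∀ C ∈ 𝒞, ∀ D ∈ 𝒞, C ≠ D → Disjoint C D) ∧
      ⋃₀ 𝒞 = Set.univ ∧
      ∀ C ∈ 𝒞, IsUnitCircle C := by
  refine ⟨Set.range F, ?_, ?_, ?_⟩
  · rintro C ⟨i, rfl⟩ D ⟨j, rfl⟩ hne
    rcases lt_trichotomy i j with h | h | h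
    · rcases (F_spec j).2.2 i h with h' | h'
      · exact absurd h' hne
      · exact h'
    · exact absurd (congrArg F h) hne
    · rcases (F_spec i).2.2 j h with h' | h'
      · exact absurd h'.symm hne
      · exact h'.symm
  · rw [Set.eq_univ_iff_forall]
    intro x
    refine ⟨F (pt.symm x), ⟨pt.symm x, rfl⟩, ?_⟩
    have := (F_spec (pt.symm x)).2.1
    rwa [Equiv.apply_symm_apply] at this
  · rintro C ⟨i, rfl⟩
    exact (F_spec i).1
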